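/- Let E ∈ ℂ⁴ be a column vector and E' a row vector of length 4 satisfying (E' ⊗ 1₂)(1₂ ⊗ E) = 1₂ and (1₂ ⊗ E')(E ⊗ 1₂) = 1₂, let X be an invertible 4×4 complex matrix satisfying (X ⊗ 1₂)(1₂ ⊗ X)(E ⊗ 1₂) = 1₂ ⊗ E, and suppose τ·conj(X)·τ = β⁻¹X for some nonzero β ∈ ℂ (conj denotes entrywise complex conjugation). Set Ẽ = τ·conj(E) (a column vector) and Ẽ' = conj(E')·τ (a row vector). Then: (i) β⁻²(1₂ ⊗ X)(X ⊗ 1₂)(1₂ ⊗ Ẽ) = Ẽ ⊗ 1₂; (ii) β²(X⁻¹ ⊗ 1₂)(1₂ ⊗ X⁻¹)(Ẽ ⊗ 1₂) = 1₂ ⊗ Ẽ; (iii) β⁻²(Ẽ' ⊗ 1₂)(1₂ ⊗ X)(X ⊗ 1₂) = 1₂ ⊗ Ẽ'; and (iv) β²(1₂ ⊗ Ẽ')(X⁻¹ ⊗ 1₂)(1₂ ⊗ X⁻¹) = Ẽ' ⊗ 1₂. -/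

import Mathlib

open Matrix Complex

noncomputable section

/-- Kronecker product of `Fin`-indexed matrices, with the standard (lexicographic)
Kronecker ordering of indices. -/
def kron {m n p q : ℕ} (A : Matrix (Fin m) (Fin n) ℂ) (B : Matrix (Fin p) (Fin q) ℂ) :
    Matrix (Fin (m * p)) (Fin (n * q)) ℂ :=
  Matrix.of fun i j => A i.divNat j.divNat * B i.modNat j.modNat

/-- The flip matrix τ on ℂ²⊗ℂ² ≅ ℂ⁴ determined by τ(u⊗v) = v⊗u. -/
def tau4 : Matrix (Fin 4) (Fin 4) ℂ :=
  !![1, 0, 0, 0; 0, 0, 1, 0; 0, 1, 0, 0; 0, 0, 0, 1]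

/-- 2×2 identity matrix. -/
def one2 : Matrix (Fin 2) (Fin 2) ℂ := 1

/-- `Ẽ = τ·conj(E)`. -/
def Etilde (E : Matrix (Fin 4) (Fin 1) ℂ) : Matrix (Fin 4) (Fin 1) ℂ :=
  tau4 * E.map (starRingEnd ℂ)

/-- `Ẽ' = conj(E')·τ`. -/
def Etilde' (E' : Matrix (Fin 1) (Fin 4) ℂ) : Matrix (Fin 1) (Fin 4) ℂ :=
  E'.map (starRingEnd ℂ) * tau4


/-! ### Generic Kronecker lemmas -/

theorem divNat_e {n r : ℕ} (a : Fin n) (b : Fin r) : (finProdFinEquiv (a, b)).divNat = a :=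
  congrArg Prod.fst (finProdFinEquiv.symm_apply_apply (a, b))
theorem modNat_e {n r : ℕ} (a : Fin n) (b : Fin r) : (finProdFinEquiv (a, b)).modNat = b :=
  congrArg Prod.snd (finProdFinEquiv.symm_apply_apply (a, b))

theorem divmodNat_inj {m p : ℕ} {i j : Fin (m * p)} (h1 : i.divNat = j.divNat)
    (h2 : i.modNat = j.modNat) : i = j := by
  have : finProdFinEquiv.symm i = finProdFinEquiv.symm j := by
    change (i.divNat, i.modNat) = (j.divNat, j.modNat); rw [h1, h2]
  exact finProdFinEquiv.symm.injective this

theorem kron_mul {m n p q r s : ℕ} (A : Matrix (Fin m) (Fin n) ℂ) (B : Matrix (Fin q) (Fin r) ℂ)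
    (C : Matrix (Fin n) (Fin p) ℂ) (D : Matrix (Fin r) (Fin s) ℂ) :
    kron A B * kron C D = kron (A * C) (B * D) := by
  ext i j
  simp only [Matrix.mul_apply, kron, Matrix.of_apply]
  rw [← Equiv.sum_comp (finProdFinEquiv (m := n) (n := r)), Fintype.sum_prod_type]
  simp only [divNat_e, modNat_e]
  rw [Finset.sum_mul_sum]
  apply Finset.sum_congr rfl; intro a _
  apply Finset.sum_congr rfl; intro b _
  ring

theorem kron_one_one {m p : ℕ} :
    kron (1 : Matrix (Fin m) (Fin m) ℂ) (1 : Matrix (Fin p) (Fin p) ℂ) = 1 := by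
  ext i j
  simp only [kron, Matrix.of_apply, Matrix.one_apply]
  by_cases h : i = j
  · subst h; simp
  · have : ¬(i.divNat = j.divNat ∧ i.modNat = j.modNat) := fun ⟨h1, h2⟩ => h (divmodNat_inj h1 h2)
    rcases not_and_or.mp this with h' | h' <;> simp [h', if_neg h]

theorem cast_divNat {a b c : ℕ} (x : Fin (a * b * c)) :
    (Fin.cast (mul_assoc a b c) x).divNat = x.divNat.divNat := by
  apply Fin.ext
  simp only [Fin.coe_divNat, Fin.coe_cast]
  rw [Nat.div_div_eq_div_mul, Nat.mul_comm c b]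

theorem cast_modNat_divNat {a b c : ℕ} (x : Fin (a * b * c)) :
    (Fin.cast (mul_assoc a b c) x).modNat.divNat = x.divNat.modNat := by
  apply Fin.ext
  simp only [Fin.coe_divNat, Fin.coe_modNat, Fin.coe_cast]
  rw [Nat.mul_comm b c, Nat.mod_mul_right_div_self]

theorem cast_modNat_modNat {a b c : ℕ} (x : Fin (a * b * c)) :
    (Fin.cast (mul_assoc a b c) x).modNat.modNat = x.modNat := by
  apply Fin.ext
  simp only [Fin.coe_modNat, Fin.coe_cast]
  exact Nat.mod_mod_of_dvd _ ⟨b, Nat.mul_comm b c⟩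

theorem kron_assoc {m n p q r s : ℕ} (A : Matrix (Fin m) (Fin n) ℂ) (B : Matrix (Fin p) (Fin q) ℂ)
    (C : Matrix (Fin r) (Fin s) ℂ) :
    kron (kron A B) C =
      (kron A (kron B C)).submatrix (Fin.cast (mul_assoc m p r)) (Fin.cast (mul_assoc n q s)) := by
  ext i j
  simp only [kron, Matrix.of_apply, Matrix.submatrix_apply, cast_divNat, cast_modNat_divNat,
    cast_modNat_modNat, mul_assoc]

theorem kron_one_left {p q : ℕ} (B : Matrix (Fin p) (Fin q) ℂ) :
    kron (1 : Matrix (Fin 1) (Fin 1) ℂ) B =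
      B.submatrix (Fin.cast (one_mul p)) (Fin.cast (one_mul q)) := by
  ext i j
  have hi := i.isLt; have hj := j.isLt
  simp only [kron, Matrix.of_apply, Matrix.submatrix_apply, Matrix.one_apply]
  rw [if_pos (Subsingleton.elim _ _), one_mul]
  congr 1 <;> apply Fin.ext <;> simp only [Fin.coe_modNat, Fin.coe_cast] <;>
    exact Nat.mod_eq_of_lt (by omega)

theorem kron_one_right {p q : ℕ} (B : Matrix (Fin p) (Fin q) ℂ) :
    kron B (1 : Matrix (Fin 1) (Fin 1) ℂ) =
      B.submatrix (Fin.cast (mul_one p)) (Fin.cast (mul_one q)) := by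
  ext i j
  have hi := i.isLt; have hj := j.isLt
  simp only [kron, Matrix.of_apply, Matrix.submatrix_apply, Matrix.one_apply]
  rw [if_pos (Subsingleton.elim _ _), mul_one]
  congr 1 <;> apply Fin.ext <;> simp only [Fin.coe_divNat, Fin.coe_cast] <;>
    exact Nat.div_one _

theorem kron_smul_left {m n p q : ℕ} (c : ℂ) (A : Matrix (Fin m) (Fin n) ℂ)
    (B : Matrix (Fin p) (Fin q) ℂ) : kron (c • A) B = c • kron A B := by
  ext i j; simp [kron, Matrix.smul_apply, mul_assoc]

theorem kron_smul_right {m n p q : ℕ} (c : ℂ) (A : Matrix (Fin m) (Fin n) ℂ)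
    (B : Matrix (Fin p) (Fin q) ℂ) : kron A (c • B) = c • kron A B := by
  ext i j; simp [kron, Matrix.smul_apply]; ring

theorem kron_map {m n p q : ℕ} (A : Matrix (Fin m) (Fin n) ℂ) (B : Matrix (Fin p) (Fin q) ℂ) :
    (kron A B).map (starRingEnd ℂ) = kron (A.map (starRingEnd ℂ)) (B.map (starRingEnd ℂ)) := by
  ext i j; simp [kron, Matrix.map_apply]

theorem one2_conj : one2.map (starRingEnd ℂ) = one2 :=
  Matrix.map_one _ (map_zero _) (map_one _)

/-! ### tau4 and the reversal permutation -/

def swap4 : Fin 4 → Fin 4 := ![0, 2, 1, 3]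
def rev3 : Fin 8 → Fin 8 := ![0, 4, 2, 6, 1, 5, 3, 7]
def RR : Matrix (Fin 8) (Fin 8) ℂ := Matrix.of fun i j => if j = rev3 i then 1 else 0

theorem rev3_invol : ∀ i, rev3 (rev3 i) = i := by decide
theorem swap4_invol : ∀ i, swap4 (swap4 i) = i := by decide

theorem tau4_eq : tau4 = Matrix.of fun i j => if j = swap4 i then 1 else 0 := by
  ext i j
  fin_cases i <;> fin_cases j <;> simp [tau4, swap4, Matrix.vecHead, Matrix.vecTail]

section PermMat
variable {N : ℕ} (σ : Fin N → Fin N) (hσ : ∀ i, σ (σ i) = i)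

theorem perm_mul_apply {C : Type*} [Fintype C]
    (M : Matrix (Fin N) C ℂ) (i : Fin N) (j : C) :
    ((Matrix.of fun a b => if b = σ a then (1:ℂ) else 0) * M) i j = M (σ i) j := by
  simp [Matrix.mul_apply, ite_mul, zero_mul, one_mul]

include hσ in
theorem perm_transpose :
    (Matrix.of fun a b => if b = σ a then (1:ℂ) else 0).transpose
      = Matrix.of fun a b => if b = σ a then (1:ℂ) else 0 := by
  ext i j
  simp only [Matrix.transpose_apply, Matrix.of_apply]
  by_cases h : j = σ i
  · have h2 : i = σ j := by rw [h, hσ]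
    rw [if_pos h2, if_pos h]
  · have h2 : ¬ i = σ j := fun hh => h (by rw [hh, hσ])
    rw [if_neg h2, if_neg h]

include hσ in
theorem mul_perm_apply {C : Type*} [Fintype C]
    (M : Matrix C (Fin N) ℂ) (i : C) (j : Fin N) :
    (M * (Matrix.of fun a b => if b = σ a then (1:ℂ) else 0)) i j = M i (σ j) := by
  have h1 : (M * (Matrix.of fun a b => if b = σ a then (1:ℂ) else 0)).transpose
      = (Matrix.of fun a b => if b = σ a then (1:ℂ) else 0) * M.transpose := by
    rw [Matrix.transpose_mul, perm_transpose σ hσ]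
  have h2 := congrFun (congrFun h1 j) i
  simp only [Matrix.transpose_apply] at h2
  rw [h2, perm_mul_apply]
  rfl

end PermMat

theorem RR_mul_apply {C : Type*} [Fintype C] (M : Matrix (Fin 8) C ℂ) (i : Fin 8) (j : C) :
    (RR * M) i j = M (rev3 i) j := perm_mul_apply rev3 M i j

theorem mul_RR_apply {C : Type*} [Fintype C] (M : Matrix C (Fin 8) ℂ) (i : C) (j : Fin 8) :
    (M * RR) i j = M i (rev3 j) := mul_perm_apply rev3 rev3_invol M i j

theorem tau4_mul_apply {C : Type*} [Fintype C] (M : Matrix (Fin 4) C ℂ) (i : Fin 4) (j : C) :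
    (tau4 * M) i j = M (swap4 i) j := by rw [tau4_eq]; exact perm_mul_apply swap4 M i j

theorem mul_tau4_apply {C : Type*} [Fintype C] (M : Matrix C (Fin 4) ℂ) (i : C) (j : Fin 4) :
    (M * tau4) i j = M i (swap4 j) := by rw [tau4_eq]; exact mul_perm_apply swap4 swap4_invol M i j

theorem RR_mul_RR : RR * RR = 1 := by
  ext i j
  rw [RR_mul_apply]
  simp only [RR, Matrix.of_apply, rev3_invol, Matrix.one_apply, eq_comm]

theorem tau4_mul_tau4 : tau4 * tau4 = 1 := by
  ext i j
  rw [tau4_mul_apply]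
  rw [tau4_eq]
  simp only [Matrix.of_apply, swap4_invol, Matrix.one_apply, eq_comm]

theorem tau4_conj : tau4.map (starRingEnd ℂ) = tau4 := by
  ext i j
  fin_cases i <;> fin_cases j <;> simp [tau4, Matrix.vecHead, Matrix.vecTail]

/-! ### index bookkeeping -/

theorem f1 : ∀ i : Fin (2*4), @Fin.divNat 4 2 (rev3 i) = swap4 (@Fin.modNat 2 4 i) := by decide
theorem f2 : ∀ i : Fin (2*4), @Fin.modNat 4 2 (rev3 i) = @Fin.divNat 2 4 i := by decide
theorem f3 : ∀ i : Fin (4*2), @Fin.divNat 2 4 (rev3 i) = @Fin.modNat 4 2 i := by decide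
theorem f4 : ∀ i : Fin (4*2), @Fin.modNat 2 4 (rev3 i) = swap4 (@Fin.divNat 4 2 i) := by decide
theorem g1 : ∀ j : Fin (1*2), @Fin.modNat 1 2 j = @Fin.divNat 2 1 j := by decide

/-! ### the R-conjugation lemmas -/

theorem LA (A : Matrix (Fin 4) (Fin 4) ℂ) :
    RR * kron A one2 * RR = kron one2 (tau4 * A * tau4) := by
  ext i j
  rw [mul_RR_apply, RR_mul_apply]
  simp only [kron, Matrix.of_apply, f1, f2, mul_tau4_apply, tau4_mul_apply]
  exact mul_comm _ _

theorem LB (A : Matrix (Fin 4) (Fin 4) ℂ) :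
    RR * kron one2 A * RR = kron (tau4 * A * tau4) one2 := by
  ext i j
  rw [mul_RR_apply, RR_mul_apply]
  simp only [kron, Matrix.of_apply, f3, f4, mul_tau4_apply, tau4_mul_apply]
  exact mul_comm _ _

theorem LC (v : Matrix (Fin 4) (Fin 1) ℂ) :
    RR * kron v one2 = kron one2 (tau4 * v) := by
  ext i j
  rw [RR_mul_apply]
  simp only [kron, Matrix.of_apply, f1, f2, g1, tau4_mul_apply, Fin.eq_zero]
  exact mul_comm _ _

theorem LD (v : Matrix (Fin 4) (Fin 1) ℂ) :
    RR * kron one2 v = kron (tau4 * v) one2 := by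
  ext i j
  rw [RR_mul_apply]
  simp only [kron, Matrix.of_apply, f3, f4, g1, tau4_mul_apply, Fin.eq_zero]
  exact mul_comm _ _

theorem LE' (w : Matrix (Fin 1) (Fin 4) ℂ) :
    kron w one2 * RR = kron one2 (w * tau4) := by
  ext i j
  rw [mul_RR_apply]
  simp only [kron, Matrix.of_apply, f1, f2, g1, mul_tau4_apply, Fin.eq_zero]
  exact mul_comm _ _

theorem LF (w : Matrix (Fin 1) (Fin 4) ℂ) :
    kron one2 w * RR = kron (w * tau4) one2 := by
  ext i j
  rw [mul_RR_apply]
  simp only [kron, Matrix.of_apply, f3, f4, g1, mul_tau4_apply, Fin.eq_zero]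
  exact mul_comm _ _

theorem one2_eq : one2 = (1 : Matrix (Fin 2) (Fin 2) ℂ) := rfl

/-- The dual ("rotated") relation, derived from the snake relations by bending. -/
theorem REL (E : Matrix (Fin 4) (Fin 1) ℂ) (E' : Matrix (Fin 1) (Fin 4) ℂ)
    (X Z : Matrix (Fin 4) (Fin 4) ℂ)
    (hXinv : Z * X = 1)
    (hsnake1 : kron E' one2 * kron one2 E = one2)
    (hsnake2 : kron one2 E' * kron E one2 = one2)
    (hXE : kron X one2 * kron one2 X * kron E one2 = kron one2 E) :
    kron one2 E' * kron X one2 * kron one2 X = kron E' one2 := by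
  set W : Matrix (Fin 2) (Fin 8) ℂ := kron one2 E' * kron X one2 * kron one2 X with hW
  have one4 : kron one2 one2 = (1 : Matrix (Fin 4) (Fin 4) ℂ) := by rw [one2_eq]; exact kron_one_one
  have hXE' : kron one2 X * kron E one2 = kron Z one2 * kron one2 E := by
    have h0 : kron Z one2 * (kron X one2 * kron one2 X * kron E one2)
        = kron Z one2 * kron one2 E := by rw [hXE]
    calc kron one2 X * kron E one2
        = 1 * (kron one2 X * kron E one2) := (Matrix.one_mul _).symm
      _ = (kron Z one2 * kron X one2) * (kron one2 X * kron E one2) := by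
          rw [kron_mul, hXinv, one2_eq, Matrix.mul_one, kron_one_one]
      _ = kron Z one2 * (kron X one2 * kron one2 X * kron E one2) := by
          rw [Matrix.mul_assoc, Matrix.mul_assoc]
      _ = kron Z one2 * kron one2 E := h0
  have s1 : kron (kron E' one2) (1 : Matrix (Fin 4) (Fin 4) ℂ)
      * kron (kron one2 E) (1 : Matrix (Fin 4) (Fin 4) ℂ) = 1 := by
    rw [kron_mul, hsnake1, Matrix.one_mul, one2_eq, kron_one_one]
  have step1 : W = W * kron (kron E' one2) (1 : Matrix (Fin 4) (Fin 4) ℂ)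
      * kron (kron one2 E) (1 : Matrix (Fin 4) (Fin 4) ℂ) := by
    rw [Matrix.mul_assoc, s1, Matrix.mul_one]
  have a1 : kron (kron E' one2) (1 : Matrix (Fin 4) (Fin 4) ℂ)
      = kron E' (kron one2 (1 : Matrix (Fin 4) (Fin 4) ℂ)) := kron_assoc _ _ _
  have one8a : kron one2 (1 : Matrix (Fin 4) (Fin 4) ℂ) = (1 : Matrix (Fin 8) (Fin 8) ℂ) := by
    rw [one2_eq]; exact kron_one_one
  have step2 : W * kron (kron E' one2) (1 : Matrix (Fin 4) (Fin 4) ℂ) = kron E' W := by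
    rw [a1, one8a]
    calc W * kron E' (1 : Matrix (Fin 8) (Fin 8) ℂ)
        = kron (1 : Matrix (Fin 1) (Fin 1) ℂ) W * kron E' (1 : Matrix (Fin 8) (Fin 8) ℂ) := by
          rw [kron_one_left]; rfl
      _ = kron ((1 : Matrix (Fin 1) (Fin 1) ℂ) * E') (W * 1) := kron_mul _ _ _ _
      _ = kron E' W := by rw [Matrix.one_mul, Matrix.mul_one]
  have step3 : kron E' W = kron E' (kron one2 E')
      * kron (1 : Matrix (Fin 4) (Fin 4) ℂ) (kron X one2)
      * kron (1 : Matrix (Fin 4) (Fin 4) ℂ) (kron one2 X) := by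
    rw [kron_mul, kron_mul, Matrix.mul_one, Matrix.mul_one, ← hW]
  have step4 : kron (1 : Matrix (Fin 4) (Fin 4) ℂ) (kron one2 X)
      * kron (kron one2 E) (1 : Matrix (Fin 4) (Fin 4) ℂ)
      = kron (kron one2 E) (1 : Matrix (Fin 4) (Fin 4) ℂ) * kron one2 X := by
    have r1 : kron (1 : Matrix (Fin 4) (Fin 4) ℂ) (kron one2 X)
        = kron (kron (1 : Matrix (Fin 4) (Fin 4) ℂ) one2) X := by
      rw [kron_assoc]; rfl
    have r2 : kron (kron (1 : Matrix (Fin 4) (Fin 4) ℂ) one2) X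
        = kron (1 : Matrix (Fin 8) (Fin 8) ℂ) X := by
      rw [one2_eq, kron_one_one]
    rw [r1, r2]
    calc kron (1 : Matrix (Fin 8) (Fin 8) ℂ) X * kron (kron one2 E) (1 : Matrix (Fin 4) (Fin 4) ℂ)
        = kron ((1 : Matrix (Fin 8) (Fin 8) ℂ) * kron one2 E) (X * 1) := kron_mul _ _ _ _
      _ = kron (kron one2 E) X := by rw [Matrix.one_mul, Matrix.mul_one]
      _ = kron (kron one2 E * one2) ((1 : Matrix (Fin 4) (Fin 4) ℂ) * X) := by
          rw [one2_eq, Matrix.mul_one, Matrix.one_mul]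
      _ = kron (kron one2 E) (1 : Matrix (Fin 4) (Fin 4) ℂ) * kron one2 X := (kron_mul _ _ _ _).symm
  have A1 : kron (kron one2 one2) (kron X one2) = kron one2 (kron one2 (kron X one2)) :=
    kron_assoc _ _ _
  have A2 : kron (kron one2 X) one2 = kron one2 (kron X one2) := kron_assoc _ _ _
  have A3 : kron (kron one2 E) (kron one2 one2) = kron one2 (kron E (kron one2 one2)) :=
    kron_assoc _ _ _
  have A4 : kron (kron E one2) one2 = kron E (kron one2 one2) := kron_assoc _ _ _
  have A5 : kron (kron one2 one2) (kron one2 E') = kron one2 (kron one2 (kron one2 E')) :=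
    kron_assoc _ _ _
  have A6 : kron (kron one2 one2) E' = kron one2 (kron one2 E') := kron_assoc _ _ _
  have A7 : kron (kron Z one2) one2 = kron Z (kron one2 one2) := kron_assoc _ _ _
  have A8 : kron (kron one2 E) one2 = kron one2 (kron E one2) := kron_assoc _ _ _
  have o22 : one2 * one2 = one2 := Matrix.one_mul _
  have K1 : kron Z (1 : Matrix (Fin 1) (Fin 1) ℂ) = Z := kron_one_right Z
  have r1 : kron (1 : Matrix (Fin 4) (Fin 4) ℂ) (kron X one2)
      = kron one2 (kron (kron one2 X) one2) := by rw [← one4, A1, ← A2]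
  have r2 : kron (kron one2 E) (1 : Matrix (Fin 4) (Fin 4) ℂ)
      = kron one2 (kron (kron E one2) one2) := by rw [← one4, A3, ← A4]
  have merge : ∀ (P : Matrix (Fin 8) (Fin 8) ℂ) (Q : Matrix (Fin 8) (Fin 2) ℂ),
      kron one2 (kron P one2) * kron one2 (kron Q one2)
        = kron one2 (kron (P * Q) one2) := by
    intro P Q
    rw [kron_mul, kron_mul, o22]
  have step5 : kron (1 : Matrix (Fin 4) (Fin 4) ℂ) (kron X one2)
      * kron (kron one2 E) (1 : Matrix (Fin 4) (Fin 4) ℂ)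
      = kron one2 (kron (kron Z one2) one2) * kron one2 (kron (kron one2 E) one2) := by
    rw [r1, r2, merge, hXE', ← merge]
  have step6 : kron E' (kron one2 E')
      = kron E' one2 * kron (1 : Matrix (Fin 4) (Fin 4) ℂ) (kron one2 E') := by
    have h : kron E' one2 * kron (1 : Matrix (Fin 4) (Fin 4) ℂ) (kron one2 E')
        = kron (E' * (1 : Matrix (Fin 4) (Fin 4) ℂ)) (one2 * kron one2 E') := kron_mul _ _ _ _
    have h2 : one2 * kron one2 E' = kron one2 E' := Matrix.one_mul _
    rw [h, h2, Matrix.mul_one]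
  have step7 : kron (1 : Matrix (Fin 4) (Fin 4) ℂ) (kron one2 E')
      * kron one2 (kron (kron Z one2) one2)
      = kron one2 Z * kron (1 : Matrix (Fin 4) (Fin 4) ℂ) (kron one2 E') := by
    have lhs : kron (1 : Matrix (Fin 4) (Fin 4) ℂ) (kron one2 E')
        * kron one2 (kron (kron Z one2) one2) = kron one2 (kron Z E') := by
      rw [← one4, A5, kron_mul, o22, ← A6, A7, kron_mul, one4]
      rw [Matrix.one_mul, Matrix.mul_one]
    have rhs : kron one2 Z * kron (1 : Matrix (Fin 4) (Fin 4) ℂ) (kron one2 E')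
        = kron one2 (kron Z E') := by
      rw [← one4, A5, kron_mul, o22, ← A6, one4]
      have h3 : Z * kron (1 : Matrix (Fin 4) (Fin 4) ℂ) E' = kron Z E' := by
        calc Z * kron (1 : Matrix (Fin 4) (Fin 4) ℂ) E'
            = kron Z (1 : Matrix (Fin 1) (Fin 1) ℂ)
              * kron (1 : Matrix (Fin 4) (Fin 4) ℂ) E' := by conv_lhs => rw [← K1]
          _ = kron (Z * (1 : Matrix (Fin 4) (Fin 4) ℂ))
              ((1 : Matrix (Fin 1) (Fin 1) ℂ) * E') := kron_mul _ _ _ _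
          _ = kron Z E' := by rw [Matrix.mul_one, Matrix.one_mul]
      rw [h3]
    rw [lhs, rhs]
  have step8 : kron (1 : Matrix (Fin 4) (Fin 4) ℂ) (kron one2 E')
      * kron one2 (kron (kron one2 E) one2) = (1 : Matrix (Fin 8) (Fin 8) ℂ) := by
    rw [← one4, A5, A8, kron_mul, o22, kron_mul, hsnake2, o22, one4]
    exact one8a
  have fin1 : kron one2 Z * kron one2 X = (1 : Matrix (Fin 8) (Fin 8) ℂ) := by
    rw [kron_mul, o22, hXinv, one8a]
  calc W = W * kron (kron E' one2) (1 : Matrix (Fin 4) (Fin 4) ℂ)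
      * kron (kron one2 E) (1 : Matrix (Fin 4) (Fin 4) ℂ) := step1
    _ = kron E' W * kron (kron one2 E) (1 : Matrix (Fin 4) (Fin 4) ℂ) := by rw [step2]
    _ = kron E' (kron one2 E')
        * kron (1 : Matrix (Fin 4) (Fin 4) ℂ) (kron X one2)
        * kron (1 : Matrix (Fin 4) (Fin 4) ℂ) (kron one2 X)
        * kron (kron one2 E) (1 : Matrix (Fin 4) (Fin 4) ℂ) := by rw [← step3]
    _ = kron E' (kron one2 E')
        * kron (1 : Matrix (Fin 4) (Fin 4) ℂ) (kron X one2)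
        * (kron (1 : Matrix (Fin 4) (Fin 4) ℂ) (kron one2 X)
          * kron (kron one2 E) (1 : Matrix (Fin 4) (Fin 4) ℂ)) := by
        rw [Matrix.mul_assoc]
    _ = kron E' (kron one2 E')
        * kron (1 : Matrix (Fin 4) (Fin 4) ℂ) (kron X one2)
        * (kron (kron one2 E) (1 : Matrix (Fin 4) (Fin 4) ℂ) * kron one2 X) := by
        rw [step4]
    _ = kron E' (kron one2 E')
        * (kron (1 : Matrix (Fin 4) (Fin 4) ℂ) (kron X one2)
          * kron (kron one2 E) (1 : Matrix (Fin 4) (Fin 4) ℂ)) * kron one2 X := by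
        rw [Matrix.mul_assoc, Matrix.mul_assoc, Matrix.mul_assoc]
    _ = kron E' (kron one2 E')
        * (kron one2 (kron (kron Z one2) one2) * kron one2 (kron (kron one2 E) one2))
        * kron one2 X := by rw [step5]
    _ = kron E' one2 * kron (1 : Matrix (Fin 4) (Fin 4) ℂ) (kron one2 E')
        * (kron one2 (kron (kron Z one2) one2) * kron one2 (kron (kron one2 E) one2))
        * kron one2 X := by rw [← step6]
    _ = kron E' one2 * ((kron (1 : Matrix (Fin 4) (Fin 4) ℂ) (kron one2 E')
        * kron one2 (kron (kron Z one2) one2)) * kron one2 (kron (kron one2 E) one2))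
        * kron one2 X := by simp only [Matrix.mul_assoc]
    _ = kron E' one2 * ((kron one2 Z * kron (1 : Matrix (Fin 4) (Fin 4) ℂ) (kron one2 E'))
        * kron one2 (kron (kron one2 E) one2)) * kron one2 X := by rw [step7]
    _ = kron E' one2 * (kron one2 Z * (kron (1 : Matrix (Fin 4) (Fin 4) ℂ) (kron one2 E')
        * kron one2 (kron (kron one2 E) one2))) * kron one2 X := by
        simp only [Matrix.mul_assoc]
    _ = kron E' one2 * (kron one2 Z * 1) * kron one2 X := by rw [step8]
    _ = kron E' one2 * (kron one2 Z * kron one2 X) := by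
        rw [Matrix.mul_one, Matrix.mul_assoc]
    _ = kron E' one2 := by rw [fin1, Matrix.mul_one]

/-- If `E`, `E'` satisfy the snake relations, `X` is invertible with
`(X⊗1)(1⊗X)(E⊗1) = 1⊗E` and `τ·conj(X)·τ = β⁻¹X`, then with `Ẽ = τ·conj(E)` and
`Ẽ' = conj(E')·τ`:
(i) `β⁻²(1⊗X)(X⊗1)(1⊗Ẽ) = Ẽ⊗1`; (ii) `β²(X⁻¹⊗1)(1⊗X⁻¹)(Ẽ⊗1) = 1⊗Ẽ`;
(iii) `β⁻²(Ẽ'⊗1)(1⊗X)(X⊗1) = 1⊗Ẽ'`; (iv) `β²(1⊗Ẽ')(X⁻¹⊗1)(1⊗X⁻¹) = Ẽ'⊗1`. -/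
theorem conjugated_snake_relations
    (E : Matrix (Fin 4) (Fin 1) ℂ) (E' : Matrix (Fin 1) (Fin 4) ℂ)
    (X : Matrix (Fin 4) (Fin 4) ℂ) (hX : IsUnit X)
    (β : ℂ) (hβ : β ≠ 0)
    (hsnake1 : kron E' one2 * kron one2 E = one2)
    (hsnake2 : kron one2 E' * kron E one2 = one2)
    (hXE : kron X one2 * kron one2 X * kron E one2 = kron one2 E)
    (hXconj : tau4 * X.map (starRingEnd ℂ) * tau4 = β⁻¹ • X) :
    ((β ^ 2)⁻¹ • (kron one2 X * kron X one2 * kron one2 (Etilde E)) = kron (Etilde E) one2) ∧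
    ((β ^ 2) • (kron X⁻¹ one2 * kron one2 X⁻¹ * kron (Etilde E) one2) = kron one2 (Etilde E)) ∧
    ((β ^ 2)⁻¹ • (kron (Etilde' E') one2 * kron one2 X * kron X one2) = kron one2 (Etilde' E')) ∧
    ((β ^ 2) • (kron one2 (Etilde' E') * kron X⁻¹ one2 * kron one2 X⁻¹)
      = kron (Etilde' E') one2) := by
  have hdet : IsUnit X.det := (Matrix.isUnit_iff_isUnit_det X).mp hX
  have hXinv : X⁻¹ * X = 1 := Matrix.nonsing_inv_mul X hdet
  have hXinv' : X * X⁻¹ = 1 := Matrix.mul_nonsing_inv X hdet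
  set Y : Matrix (Fin 4) (Fin 4) ℂ := X.map (starRingEnd ℂ) with hYdef
  set F : Matrix (Fin 4) (Fin 1) ℂ := E.map (starRingEnd ℂ) with hFdef
  set F' : Matrix (Fin 1) (Fin 4) ℂ := E'.map (starRingEnd ℂ) with hF'def
  have o22 : one2 * one2 = one2 := Matrix.one_mul _
  have one8a : kron one2 (1 : Matrix (Fin 4) (Fin 4) ℂ) = (1 : Matrix (Fin 8) (Fin 8) ℂ) := by
    rw [one2_eq]; exact kron_one_one
  have one8b : kron (1 : Matrix (Fin 4) (Fin 4) ℂ) one2 = (1 : Matrix (Fin 8) (Fin 8) ℂ) := by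
    rw [one2_eq]; exact kron_one_one
  -- conjugated hypotheses
  have cE : kron Y one2 * kron one2 Y * kron F one2 = kron one2 F := by
    have h := congrArg (fun M => M.map (starRingEnd ℂ)) hXE
    simpa only [Matrix.map_mul, kron_map, one2_conj] using h
  have o2cA : @Matrix.map (Fin (1*2)) (Fin (2*1)) ℂ ℂ one2 (⇑(starRingEnd ℂ)) = one2 := one2_conj
  have o2cB : @Matrix.map (Fin (2*1)) (Fin (1*2)) ℂ ℂ one2 (⇑(starRingEnd ℂ)) = one2 := one2_conj
  have cS1 : kron F' one2 * kron one2 F = one2 := by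
    have h := congrArg (fun M => M.map (starRingEnd ℂ)) hsnake1
    simpa only [Matrix.map_mul, kron_map, one2_conj, o2cA, o2cB] using h
  have cS2 : kron one2 F' * kron F one2 = one2 := by
    have h := congrArg (fun M => M.map (starRingEnd ℂ)) hsnake2
    simpa only [Matrix.map_mul, kron_map, one2_conj, o2cA, o2cB] using h
  have cZ : (X⁻¹.map (starRingEnd ℂ)) * Y = 1 := by
    have h := congrArg (fun M => M.map (starRingEnd ℂ)) hXinv
    simpa only [Matrix.map_mul, Matrix.map_one (starRingEnd ℂ) (map_zero _) (map_one _)] using h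
  -- the rotated relation for the conjugates
  have cREL : kron one2 F' * kron Y one2 * kron one2 Y = kron F' one2 :=
    REL F F' Y (X⁻¹.map (starRingEnd ℂ)) cZ cS1 cS2 cE
  -- X in terms of Y
  have hXeq : X = β • (tau4 * Y * tau4) := by
    rw [hXconj, smul_smul, mul_inv_cancel₀ hβ, one_smul]
  have hx1 : kron one2 X = β • (RR * kron Y one2 * RR) := by
    rw [LA Y, ← kron_smul_right, ← hXeq]
  have hx2 : kron X one2 = β • (RR * kron one2 Y * RR) := by
    rw [LB Y, ← kron_smul_left, ← hXeq]
  have RRcan : ∀ {C : Type} [Fintype C] (M : Matrix (Fin 8) C ℂ), RR * (RR * M) = M := by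
    intro C _ M
    rw [← Matrix.mul_assoc, RR_mul_RR, Matrix.one_mul]
  -- scalar facts
  have sβ1 : (β ^ 2)⁻¹ * (β * β) = 1 := by
    rw [pow_two]
    exact inv_mul_cancel₀ (mul_ne_zero hβ hβ)
  have sβ2 : (β ^ 2) * (β * β)⁻¹ = 1 := by
    rw [pow_two]
    exact mul_inv_cancel₀ (mul_ne_zero hβ hβ)
  have sβ3 : (β * β)⁻¹ * (β * β) = 1 := inv_mul_cancel₀ (mul_ne_zero hβ hβ)
  -- key identity for (i) and (ii)
  have cE' : kron Y one2 * (kron one2 Y * kron F one2) = kron one2 F := by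
    rw [← Matrix.mul_assoc]; exact cE
  have key1 : kron one2 X * kron X one2 * kron one2 (Etilde E)
      = (β * β) • kron (Etilde E) one2 := by
    have hx3 : kron one2 (Etilde E) = RR * kron F one2 := (LC F).symm
    rw [hx1, hx2, hx3]
    simp only [Matrix.smul_mul, Matrix.mul_smul, smul_smul, Matrix.mul_assoc, RRcan]
    rw [cE', LD]
    rfl
  have key3 : kron (Etilde' E') one2 * kron one2 X * kron X one2
      = (β * β) • kron one2 (Etilde' E') := by
    have hx4 : kron (Etilde' E') one2 = kron one2 F' * RR := (LF F').symm
    rw [hx1, hx2, hx4]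
    simp only [Matrix.smul_mul, Matrix.mul_smul, smul_smul, Matrix.mul_assoc, RRcan]
    have cREL' : kron one2 F' * (kron Y one2 * (kron one2 Y * RR)) = kron F' one2 * RR := by
      simp only [← Matrix.mul_assoc]
      rw [cREL]
    rw [cREL', LE']
    rfl
  -- cancellation facts
  have i1 : kron X⁻¹ one2 * kron X one2 = (1 : Matrix (Fin 8) (Fin 8) ℂ) := by
    rw [kron_mul, o22, hXinv, one8b]
  have i2 : kron one2 X⁻¹ * kron one2 X = (1 : Matrix (Fin 8) (Fin 8) ℂ) := by
    rw [kron_mul, o22, hXinv, one8a]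
  have i3 : kron X one2 * kron X⁻¹ one2 = (1 : Matrix (Fin 8) (Fin 8) ℂ) := by
    rw [kron_mul, o22, hXinv', one8b]
  have i4 : kron one2 X * kron one2 X⁻¹ = (1 : Matrix (Fin 8) (Fin 8) ℂ) := by
    rw [kron_mul, o22, hXinv', one8a]
  refine ⟨?_, ?_, ?_, ?_⟩
  · rw [key1, smul_smul, sβ1, one_smul]
  · have et1 : kron (Etilde E) one2
        = (β * β)⁻¹ • (kron one2 X * kron X one2 * kron one2 (Etilde E)) := by
      rw [key1, smul_smul, sβ3, one_smul]
    rw [et1, Matrix.mul_smul, smul_smul, sβ2, one_smul]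
    calc kron X⁻¹ one2 * kron one2 X⁻¹ * (kron one2 X * kron X one2 * kron one2 (Etilde E))
        = kron X⁻¹ one2 * (kron one2 X⁻¹ * kron one2 X) * (kron X one2 * kron one2 (Etilde E))
          := by simp only [Matrix.mul_assoc]
      _ = kron X⁻¹ one2 * kron X one2 * kron one2 (Etilde E) := by
          rw [i2, Matrix.mul_one, Matrix.mul_assoc]
      _ = kron one2 (Etilde E) := by rw [i1, Matrix.one_mul]
  · rw [key3, smul_smul, sβ1, one_smul]
  · have et3 : kron one2 (Etilde' E')
        = (β * β)⁻¹ • (kron (Etilde' E') one2 * kron one2 X * kron X one2) := by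
      rw [key3, smul_smul, sβ3, one_smul]
    rw [et3, Matrix.smul_mul, Matrix.smul_mul, smul_smul, sβ2, one_smul]
    calc kron (Etilde' E') one2 * kron one2 X * kron X one2 * kron X⁻¹ one2 * kron one2 X⁻¹
        = kron (Etilde' E') one2 * kron one2 X * (kron X one2 * kron X⁻¹ one2) * kron one2 X⁻¹
          := by simp only [Matrix.mul_assoc]
      _ = kron (Etilde' E') one2 * (kron one2 X * kron one2 X⁻¹) := by
          rw [i3, Matrix.mul_one, Matrix.mul_assoc]
      _ = kron (Etilde' E') one2 := by rw [i4, Matrix.mul_one]
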